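/- Let a, b be natural numbers with a ≤ b. A natural number n belongs to the additive closure of the integer interval Set.Icc a b if and only if n = 0, or there exist y₁, y₂, y₃ ∈ Set.Icc a b and natural numbers z₁, z₂ such that y₁ divides z₁, y₂ divides z₂, and n = z₁ + z₂ + y₃. -/

import Mathlib

private lemma decomp_aux (a b : ℕ) (hab : a ≤ b) :
    ∀ k n : ℕ, 1 ≤ k → k * a ≤ n → n ≤ k * b →
      ∃ c d y₃ : ℕ, a ≤ y₃ ∧ y₃ ≤ b ∧ n = c * b + d * a + y₃ := by
  intro k
  induction k with
  | zero => intro n h; omega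
  | succ k ih =>
    intro n _ h1 h2
    rcases Nat.eq_zero_or_pos k with rfl | hk
    · exact ⟨0, 0, n, by simpa using h1, by simpa using h2, by simp⟩
    · by_cases hc : k * a + b ≤ n
      · obtain ⟨c, d, y₃, hy1, hy2, hn⟩ := ih (n - b) hk (by omega)
          (by have : k * b + b = (k+1) * b := by ring
              omega)
        exact ⟨c + 1, d, y₃, hy1, hy2, by have hb : b ≤ n := by nlinarith
                                          rw [add_mul, one_mul]; omega⟩
      · obtain ⟨m, rfl⟩ : ∃ m, k = m + 1 := ⟨k - 1, by omega⟩
        have hmb : m * a ≤ m * b := Nat.mul_le_mul_right a (Nat.le.refl) |>.trans (Nat.mul_le_mul_left m hab)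
        have hub : n - a ≤ (m+1) * b := by
          refine Nat.sub_le_iff_le_add.mpr ?_
          have : (m+1) * a + b ≤ (m+1) * b + a := by
            have := Nat.mul_le_mul_left m hab
            ring_nf
            ring_nf at this
            omega
          omega
        have ha : a ≤ n := le_trans (Nat.le_mul_of_pos_left a (by omega)) h1
        obtain ⟨c, d, y₃, hy1, hy2, hn⟩ := ih (n - a) hk
          (by have : (m+1+1) * a = (m+1) * a + a := by ring
              omega) hub
        exact ⟨c, d + 1, y₃, hy1, hy2, by rw [add_mul, one_mul]; omega⟩

theorem mem_addClosure_Icc_iff_divisibility (a b : ℕ) (hab : a ≤ b) (n : ℕ) :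
    n ∈ AddSubmonoid.closure (Set.Icc a b) ↔
      n = 0 ∨ ∃ y₁ ∈ Set.Icc a b, ∃ y₂ ∈ Set.Icc a b, ∃ y₃ ∈ Set.Icc a b,
        ∃ z₁ z₂ : ℕ, y₁ ∣ z₁ ∧ y₂ ∣ z₂ ∧ n = z₁ + z₂ + y₃ := by
  constructor
  · intro hn
    -- first extract ∃ k, k*a ≤ n ≤ k*b
    have key : ∃ k : ℕ, k * a ≤ n ∧ n ≤ k * b := by
      induction hn using AddSubmonoid.closure_induction with
      | mem x hx => exact ⟨1, by simpa using hx.1, by simpa using hx.2⟩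
      | zero => exact ⟨0, by simp, by simp⟩
      | add x y _ _ hx hy =>
        obtain ⟨k1, h1, h2⟩ := hx
        obtain ⟨k2, h3, h4⟩ := hy
        exact ⟨k1 + k2, by nlinarith, by nlinarith⟩
    obtain ⟨k, h1, h2⟩ := key
    rcases Nat.eq_zero_or_pos n with rfl | hn0
    · exact Or.inl rfl
    · have hk : 1 ≤ k := by
        rcases Nat.eq_zero_or_pos k with rfl | h; · simp at h2; omega
        · exact h
      obtain ⟨c, d, y₃, hy1, hy2, hn⟩ := decomp_aux a b hab k n hk h1 h2
      refine Or.inr ⟨b, ⟨hab, le_rfl⟩, a, ⟨le_rfl, hab⟩, y₃, ⟨hy1, hy2⟩,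
        c * b, d * a, ⟨c, mul_comm _ _⟩, ⟨d, mul_comm _ _⟩, hn⟩
  · rintro (rfl | ⟨y₁, hy₁, y₂, hy₂, y₃, hy₃, z₁, z₂, ⟨c, rfl⟩, ⟨d, rfl⟩, rfl⟩)
    · exact zero_mem _
    · exact add_mem (add_mem
        (by rw [mul_comm]; exact nsmul_mem (AddSubmonoid.subset_closure hy₁) c)
        (by rw [mul_comm]; exact nsmul_mem (AddSubmonoid.subset_closure hy₂) d))
        (AddSubmonoid.subset_closure hy₃)
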